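/- Let $G$ be a Lie group with Lie algebra $\mathfrak{g}$, $\mathfrak{t}$ an abelian subalgebra with corresponding torus data, $h$ a smooth $\mathrm{Ad}$-invariant function with gradient $u_h$, and $F$ self-adjoint with image in $\mathfrak{t}$, vanishing on $\mathfrak{t}^\perp$. Then for every $y \in \mathfrak{g}$ and $s,t \in \mathbb{R}$, one has the identity in $G$: $e^{sFy}\, e^{t\,u_h(e^{-s\,\mathrm{ad}_{Fy}} y)} = e^{t\,u_h(y)}\, e^{sFy}$, i.e. the Hamiltonian flows of $h$ and $f(y)=\frac12\langle y,Fy\rangle$ on $T^*G \cong G \times \mathfrak{g}$ commute. -/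

import Mathlib

open scoped RealInnerProductSpace

/-- Equivariance of the gradient of an `Ad`-invariant function. -/
theorem u_equivariant
    {g : Type*} [NormedAddCommGroup g] [InnerProductSpace ℝ g] [FiniteDimensional ℝ g]
    {G : Type*} [Group G]
    (Ad : G →* (g ≃ₗ[ℝ] g))
    (hAdinv : ∀ (x : G) (A B : g), ⟪Ad x A, Ad x B⟫ = ⟪A, B⟫)
    (h : g → ℝ) (hh : Differentiable ℝ h)
    (hAdh : ∀ (x : G) (y : g), h (Ad x y) = h y)
    (u : g → g)
    (hu : ∀ (y A : g), ⟪u y, A⟫ = fderiv ℝ h y A)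
    (x : G) (y : g) : u (Ad x y) = Ad x (u y) := by
  apply ext_inner_right ℝ
  intro A
  set L : g →L[ℝ] g := LinearMap.toContinuousLinearMap ((Ad x : g ≃ₗ[ℝ] g) : g →ₗ[ℝ] g)
  have hL : ∀ v, L v = Ad x v := fun v => rfl
  have hcomp : h ∘ L = h := by
    funext v; simp [Function.comp, hL, hAdh]
  have hder : fderiv ℝ h y = (fderiv ℝ h (L y)).comp L := by
    conv_lhs => rw [← hcomp]
    rw [show (h ∘ L : g → ℝ) = h ∘ (L : g → g) from rfl]
    rw [fderiv_comp y (hh (L y)) L.differentiableAt, L.fderiv]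
  have hinv : Ad x (Ad x⁻¹ A) = A := by
    rw [map_inv]
    exact (Ad x).apply_symm_apply A
  calc ⟪u (Ad x y), A⟫ = fderiv ℝ h (Ad x y) A := hu _ _
    _ = fderiv ℝ h (L y) (L (Ad x⁻¹ A)) := by rw [hL, hL, hinv]
    _ = fderiv ℝ h y (Ad x⁻¹ A) := by rw [hder]; rfl
    _ = ⟪u y, Ad x⁻¹ A⟫ := (hu _ _).symm
    _ = ⟪Ad x (u y), Ad x (Ad x⁻¹ A)⟫ := (hAdinv x _ _).symm
    _ = ⟪Ad x (u y), A⟫ := by rw [hinv]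

/-- commutation of the Hamiltonian flows of the bi-invariant Hamiltonian `h`
and the `G × T`-invariant quadratic Hamiltonian `f(y) = ½⟪y, Fy⟫` on `T*G ≅ G × 𝔤`:
`e^{sFy} · e^{t u(e^{-s ad_{Fy}} y)} = e^{t u(y)} · e^{sFy}` in the group `G`.
The group `G`, its exponential `expG`, the adjoint representation `Ad` and the relations
`Ad (expG X) = e^{ad_X}` and `expG (Ad_x X) = x (expG X) x⁻¹` are given as data. -/
theorem flows_commute
    {g : Type*} [NormedAddCommGroup g] [InnerProductSpace ℝ g] [FiniteDimensional ℝ g]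
    (l : g →ₗ[ℝ] g →ₗ[ℝ] g)
    (hlalt : ∀ X : g, l X X = 0)
    (hljac : ∀ X Y Z : g, l X (l Y Z) = l (l X Y) Z + l Y (l X Z))
    (t : Submodule ℝ g)
    (htsub : ∀ A ∈ t, ∀ B ∈ t, l A B ∈ t)
    (habelian : ∀ A ∈ t, ∀ B ∈ t, l A B = 0)
    (F : g →ₗ[ℝ] g)
    (hFsa : ∀ v w : g, ⟪F v, w⟫ = ⟪v, F w⟫)
    (hFim : ∀ v : g, F v ∈ t)
    (hFperp : ∀ v ∈ tᗮ, F v = 0)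
    (G : Type*) [Group G]
    (expG : g → G)
    (Ad : G →* (g ≃ₗ[ℝ] g))
    (hAdinv : ∀ (x : G) (A B : g), ⟪Ad x A, Ad x B⟫ = ⟪A, B⟫)
    (h : g → ℝ) (hh : Differentiable ℝ h)
    (hAdh : ∀ (x : G) (y : g), h (Ad x y) = h y)
    (u : g → g)
    (hu : ∀ (y A : g), ⟪u y, A⟫ = fderiv ℝ h y A)
    (hAdexp : ∀ (X V : g),
      Ad (expG X) V = NormedSpace.exp (LinearMap.toContinuousLinearMap (l X)) V)
    (hconj : ∀ (x : G) (X : g), expG (Ad x X) = x * expG X * x⁻¹)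
    (y : g) (s t' : ℝ) :
    expG (s • F y)
        * expG (t' • u (NormedSpace.exp
            ((-s) • LinearMap.toContinuousLinearMap (l (F y))) y))
      = expG (t' • u y) * expG (s • F y) := by
  set A : g →L[ℝ] g := LinearMap.toContinuousLinearMap (l (F y)) with hA
  set x : G := expG (s • F y) with hx
  -- Ad x = exp (s • A)
  have hAdx : ∀ V, Ad x V = NormedSpace.exp (s • A) V := by
    intro V
    have : LinearMap.toContinuousLinearMap (l (s • F y)) = s • A := by
      rw [map_smul, map_smul]
    rw [hx, hAdexp, this]
  -- exp (s•A) * exp (-(s•A)) = 1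
  have hmul : NormedSpace.exp (s • A) * NormedSpace.exp (-(s • A)) = 1 := by
    rw [← NormedSpace.exp_add_of_commute_of_mem_ball (𝕂 := ℝ) (x := s • A) (y := -(s • A)) (Commute.neg_right rfl) ((NormedSpace.expSeries_radius_eq_top ℝ (g →L[ℝ] g)).symm ▸ edist_lt_top _ _) ((NormedSpace.expSeries_radius_eq_top ℝ (g →L[ℝ] g)).symm ▸ edist_lt_top _ _)]
    simp
  have hinvy : Ad x⁻¹ y = NormedSpace.exp ((-s) • A) y := by
    have h1 : Ad x (NormedSpace.exp ((-s) • A) y) = y := by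
      rw [hAdx, neg_smul]
      have := congrArg (fun T : g →L[ℝ] g => T y) hmul
      simpa using this
    have h2 : Ad x⁻¹ (Ad x (NormedSpace.exp ((-s) • A) y))
        = NormedSpace.exp ((-s) • A) y := by
      rw [map_inv]
      exact (Ad x).symm_apply_apply _
    rw [← h2, h1]
  -- rewrite the inner exp argument
  rw [← hinvy]
  have hequiv := u_equivariant Ad hAdinv h hh hAdh u hu x⁻¹ y
  rw [hequiv, ← map_smul, hconj]
  group
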